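/- Let (Q,a) be a finite quiver without vertex loops with an admissible automorphism a. For all α, β ∈ (ℤ𝓘)^⟨a⟩: (1) (α,β)_Q = (f(α),f(β))_Γ; (2) setting s_𝐢 := ∏_{i ∈ 𝐢} r_i ∈ W(Q) (a well-defined element, since the reflections r_i for vertices i in a single ⟨a⟩-orbit pairwise commute by admissibility), one has f(s_𝐢(α)) = r_𝐢(f(α)) in ℤ𝐈. -/

import Mathlib

noncomputable section
open scoped Classical

/-- A finite quiver without vertex loops. -/
structure FinQuiver where
  V : Type
  A : Type
  [finV : Fintype V]
  [finA : Fintype A]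
  s : A → V
  t : A → V
  no_loop : ∀ ρ, s ρ ≠ t ρ

attribute [instance] FinQuiver.finV FinQuiver.finA

/-- An automorphism of a quiver. -/
structure QuiverAut (Q : FinQuiver) where
  vmap : Q.V ≃ Q.V
  amap : Q.A ≃ Q.A
  hs : ∀ ρ, Q.s (amap ρ) = vmap (Q.s ρ)
  ht : ∀ ρ, Q.t (amap ρ) = vmap (Q.t ρ)

namespace QuiverAut

variable {Q : FinQuiver} (σ : QuiverAut Q)

/-- Two vertices lie in the same `⟨a⟩`-orbit. -/
def SameOrbit (i j : Q.V) : Prop := ∃ n : ℤ, ((σ.vmap : Equiv.Perm Q.V) ^ n) i = j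

theorem sameOrbit_equivalence : Equivalence σ.SameOrbit := by
  constructor
  · intro i; exact ⟨0, rfl⟩
  · rintro i j ⟨n, rfl⟩
    exact ⟨-n, by rw [← Equiv.Perm.mul_apply, ← zpow_add]; simp⟩
  · rintro i j l ⟨n, rfl⟩ ⟨m, rfl⟩
    exact ⟨m + n, by rw [← Equiv.Perm.mul_apply, ← zpow_add]⟩

/-- The setoid of `⟨a⟩`-orbits of vertices. -/
def orbSetoid : Setoid Q.V := ⟨σ.SameOrbit, σ.sameOrbit_equivalence⟩

/-- The set `𝐈` of `⟨a⟩`-orbits of vertices. -/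
def Orb := Quotient σ.orbSetoid

instance : Finite σ.Orb := Quotient.finite _
instance : Fintype σ.Orb := Fintype.ofFinite _

/-- The orbit of a vertex. -/
def orbOf (i : Q.V) : σ.Orb := Quotient.mk σ.orbSetoid i

/-- `a` is admissible if no arrow joins two vertices in the same orbit. -/
def Admissible : Prop := ∀ ρ : Q.A, ¬ σ.SameOrbit (Q.s ρ) (Q.t ρ)

/-- `d oi` is the number of vertices in the orbit `oi`. -/
def d (oi : σ.Orb) : ℕ := (Finset.univ.filter fun i : Q.V => σ.orbOf i = oi).card

/-- The number of edges of `Q` between two distinct orbits. -/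
def e (oi oj : σ.Orb) : ℕ :=
  (Finset.univ.filter fun ρ : Q.A =>
    (σ.orbOf (Q.s ρ) = oi ∧ σ.orbOf (Q.t ρ) = oj) ∨
    (σ.orbOf (Q.s ρ) = oj ∧ σ.orbOf (Q.t ρ) = oi)).card

/-- The symmetric matrix `B` associated to `(Q,a)`. -/
def B (oi oj : σ.Orb) : ℤ := if oi = oj then 2 * σ.d oi else -(σ.e oi oj : ℤ)

/-- The symmetric bilinear form `(−,−)_Γ` on `ℤ𝐈` determined by `B`. -/
def formG (α β : σ.Orb → ℤ) : ℤ := ∑ oi, ∑ oj, σ.B oi oj * α oi * β oj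

/-- The order of the automorphism: `n` is the exact period of `a`. -/
def IsOrder (n : ℕ) : Prop :=
  0 < n ∧ (∀ i, σ.vmap^[n] i = i) ∧ (∀ ρ, σ.amap^[n] ρ = ρ) ∧
    ∀ m, 0 < m → ((∀ i, σ.vmap^[m] i = i) ∧ (∀ ρ, σ.amap^[m] ρ = ρ)) → n ∣ m

/-- The action of `a` on the root lattice `ℤ𝓘`. -/
def act (α : Q.V → ℤ) : Q.V → ℤ := fun i => α (σ.vmap.symm i)

/-- The action of `a` on the root lattice, as a permutation of the lattice. -/
def latPerm : Equiv.Perm (Q.V → ℤ) where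
  toFun α := fun i => α (σ.vmap.symm i)
  invFun α := fun i => α (σ.vmap i)
  left_inv α := by funext i; simp
  right_inv α := by funext i; simp

/-- `α ∈ (ℤ𝓘)^⟨a⟩`, i.e. `α` is fixed by `a`. -/
def IsFixed (α : Q.V → ℤ) : Prop := ∀ i, α (σ.vmap i) = α i

/-- The canonical bijection `f : (ℤ𝓘)^⟨a⟩ → ℤ𝐈`, evaluated using a choice of
representative vertex in each orbit. -/
def fmap (α : Q.V → ℤ) : σ.Orb → ℤ := fun oi => α oi.out

end QuiverAut

/-- The standard basis vector (simple root) at an index. -/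
def eVec {ι : Type} [DecidableEq ι] (i : ι) : ι → ℤ := fun j => if j = i then 1 else 0

namespace FinQuiver

variable (Q : FinQuiver)

/-- The number of edges between two vertices of `Q`. -/
def eQ (i j : Q.V) : ℕ :=
  (Finset.univ.filter fun ρ : Q.A =>
    (Q.s ρ = i ∧ Q.t ρ = j) ∨ (Q.s ρ = j ∧ Q.t ρ = i)).card

/-- The symmetric generalised Cartan matrix of `Q`. -/
def AQ (i j : Q.V) : ℤ := if i = j then 2 else -(Q.eQ i j : ℤ)

/-- The symmetric bilinear form `(−,−)_Q` on `ℤ𝓘`. -/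
def formQ (α β : Q.V → ℤ) : ℤ := ∑ i, ∑ j, Q.AQ i j * α i * β j

/-- The simple reflection `r_i` on `ℤ𝓘`. -/
def reflQ (i : Q.V) (α : Q.V → ℤ) : Q.V → ℤ :=
  fun j => α j - Q.formQ α (eVec i) * eVec i j

theorem reflQ_involutive (i : Q.V) : Function.Involutive (Q.reflQ i) := by
  have he : Q.formQ (eVec i) (eVec i) = 2 := by
    simp [formQ, eVec, mul_ite, ite_mul, mul_one, mul_zero, zero_mul, one_mul,
      Finset.sum_ite_eq', AQ]
  have hlin : ∀ (c : ℤ) (α : Q.V → ℤ), Q.formQ (fun j => α j - c * eVec i j) (eVec i)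
      = Q.formQ α (eVec i) - c * Q.formQ (eVec i) (eVec i) := by
    intro c α
    have h : ∀ u v : Q.V, Q.AQ u v * (α u - c * eVec i u) * eVec i v
        = Q.AQ u v * α u * eVec i v - c * (Q.AQ u v * eVec i u * eVec i v) := by
      intro u v; ring
    simp only [formQ, h, Finset.sum_sub_distrib, ← Finset.mul_sum]
  intro α
  funext j
  simp only [reflQ]
  rw [show Q.reflQ i α = fun j => α j - Q.formQ α (eVec i) * eVec i j from rfl, hlin, he]
  ring

/-- The simple reflection `r_i`, as a permutation of the root lattice. -/
def reflQPerm (i : Q.V) : Equiv.Perm (Q.V → ℤ) := (Q.reflQ_involutive i).toPerm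

/-- The Weyl group `W(Q)`, as a subgroup of the permutations of the root lattice. -/
def weylQ : Subgroup (Equiv.Perm (Q.V → ℤ)) := Subgroup.closure (Set.range Q.reflQPerm)

/-- A vector is positive if it is non-zero with non-negative entries. -/
def PosVec {ι : Type} (α : ι → ℤ) : Prop := α ≠ 0 ∧ ∀ i, 0 ≤ α i

/-- Adjacency of vertices in the underlying graph of `Q`. -/
def adjQ (i j : Q.V) : Prop := ∃ ρ, (Q.s ρ = i ∧ Q.t ρ = j) ∨ (Q.s ρ = j ∧ Q.t ρ = i)

/-- The support of `α` is connected. -/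
def SuppConnQ (α : Q.V → ℤ) : Prop :=
  ∀ i j, α i ≠ 0 → α j ≠ 0 →
    Relation.ReflTransGen (fun u v => Q.adjQ u v ∧ α u ≠ 0 ∧ α v ≠ 0) i j

/-- The fundamental region for `Q`. -/
def fundQ : Set (Q.V → ℤ) :=
  {α | PosVec α ∧ (∀ i, Q.formQ α (eVec i) ≤ 0) ∧ Q.SuppConnQ α}

/-- The real roots of `Q`. -/
def realRootsQ : Set (Q.V → ℤ) :=
  {α | ∃ w ∈ Q.weylQ, ∃ i, α = w (eVec i)}

/-- The imaginary roots of `Q`. -/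
def imRootsQ : Set (Q.V → ℤ) :=
  {α | ∃ w ∈ Q.weylQ, ∃ β ∈ Q.fundQ, α = w β ∨ α = -(w β)}

/-- The root system `Δ(Q)`. -/
def rootsQ : Set (Q.V → ℤ) := Q.realRootsQ ∪ Q.imRootsQ

/-- The positive roots `Δ(Q)_+`. -/
def posRootsQ : Set (Q.V → ℤ) := {α ∈ Q.rootsQ | PosVec α}

end FinQuiver

namespace QuiverAut

variable {Q : FinQuiver} (σ : QuiverAut Q)

/-- The simple reflection `r_oi` on `ℤ𝐈` for the valued graph `Γ`. -/
def reflG (oi : σ.Orb) (α : σ.Orb → ℤ) : σ.Orb → ℤ :=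
  fun oj => α oj - (σ.formG α (eVec oi) / (σ.d oi : ℤ)) * eVec oi oj

theorem d_pos (oi : σ.Orb) : 0 < σ.d oi := by
  refine Finset.card_pos.mpr ⟨oi.out, ?_⟩
  exact Finset.mem_filter.mpr ⟨Finset.mem_univ _, Quotient.out_eq oi⟩

theorem reflG_involutive (oi : σ.Orb) : Function.Involutive (σ.reflG oi) := by
  have hd : (0 : ℤ) < (σ.d oi : ℤ) := by exact_mod_cast σ.d_pos oi
  have he : σ.formG (eVec oi) (eVec oi) = 2 * (σ.d oi : ℤ) := by
    simp [formG, eVec, mul_ite, ite_mul, mul_one, mul_zero, zero_mul, one_mul,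
      Finset.sum_ite_eq', B]
  have hlin : ∀ (c : ℤ) (α : σ.Orb → ℤ), σ.formG (fun j => α j - c * eVec oi j) (eVec oi)
      = σ.formG α (eVec oi) - c * σ.formG (eVec oi) (eVec oi) := by
    intro c α
    have h : ∀ u v : σ.Orb, σ.B u v * (α u - c * eVec oi u) * eVec oi v
        = σ.B u v * α u * eVec oi v - c * (σ.B u v * eVec oi u * eVec oi v) := by
      intro u v; ring
    simp only [formG, h, Finset.sum_sub_distrib, ← Finset.mul_sum]
  have hdiv : ∀ x : ℤ, (x - x / (σ.d oi : ℤ) * (2 * (σ.d oi : ℤ))) / (σ.d oi : ℤ)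
      = -(x / (σ.d oi : ℤ)) := by
    intro x
    set D : ℤ := (σ.d oi : ℤ)
    have h := Int.mul_ediv_add_emod x D
    have h2 : x - x / D * (2 * D) = x % D + -(x / D) * D := by linarith
    rw [h2, Int.add_mul_ediv_right _ _ hd.ne',
      Int.ediv_eq_zero_of_lt (Int.emod_nonneg x hd.ne') (Int.emod_lt_of_pos x hd)]
    ring
  intro α
  funext j
  simp only [reflG]
  rw [show σ.reflG oi α = fun j => α j - σ.formG α (eVec oi) / (σ.d oi : ℤ) * eVec oi j
      from rfl, hlin, he, hdiv]
  ring

/-- The simple reflection `r_oi`, as a permutation of `ℤ𝐈`. -/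
def reflGPerm (oi : σ.Orb) : Equiv.Perm (σ.Orb → ℤ) := (σ.reflG_involutive oi).toPerm

/-- The Weyl group `W(Γ)`. -/
def weylG : Subgroup (Equiv.Perm (σ.Orb → ℤ)) := Subgroup.closure (Set.range σ.reflGPerm)

/-- Adjacency of orbits in the valued graph `Γ`. -/
def adjG (oi oj : σ.Orb) : Prop := oi ≠ oj ∧ σ.e oi oj ≠ 0

/-- Connectivity of the support, for the valued graph `Γ`. -/
def SuppConnG (α : σ.Orb → ℤ) : Prop :=
  ∀ oi oj, α oi ≠ 0 → α oj ≠ 0 →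
    Relation.ReflTransGen (fun u v => σ.adjG u v ∧ α u ≠ 0 ∧ α v ≠ 0) oi oj

/-- The fundamental region for `Γ`. -/
def fundG : Set (σ.Orb → ℤ) :=
  {α | FinQuiver.PosVec α ∧ (∀ oi, σ.formG α (eVec oi) ≤ 0) ∧ σ.SuppConnG α}

/-- The real roots of `Γ`. -/
def realRootsG : Set (σ.Orb → ℤ) := {α | ∃ w ∈ σ.weylG, ∃ oi, α = w (eVec oi)}

/-- The imaginary roots of `Γ`. -/
def imRootsG : Set (σ.Orb → ℤ) :=
  {α | ∃ w ∈ σ.weylG, ∃ β ∈ σ.fundG, α = w β ∨ α = -(w β)}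

/-- The root system `Δ(Γ)`. -/
def rootsG : Set (σ.Orb → ℤ) := σ.realRootsG ∪ σ.imRootsG

/-- The positive roots `Δ(Γ)_+`. -/
def posRootsG : Set (σ.Orb → ℤ) := {α ∈ σ.rootsG | FinQuiver.PosVec α}

end QuiverAut

/-- A representation of a quiver `Q` over a field `k`. -/
structure QRep (k : Type) [Field k] (Q : FinQuiver) where
  M : Q.V → Type
  [acg : ∀ i, AddCommGroup (M i)]
  [mod : ∀ i, Module k (M i)]
  [fd : ∀ i, FiniteDimensional k (M i)]
  f : ∀ ρ : Q.A, M (Q.s ρ) →ₗ[k] M (Q.t ρ)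

attribute [instance] QRep.acg QRep.mod QRep.fd

namespace QRep

variable {k : Type} [Field k] {Q : FinQuiver}

/-- Isomorphism of representations. -/
def Iso (X Y : QRep k Q) : Prop :=
  ∃ e : ∀ i, X.M i ≃ₗ[k] Y.M i,
    ∀ ρ x, e (Q.t ρ) (X.f ρ x) = Y.f ρ (e (Q.s ρ) x)

/-- The direct sum of two representations. -/
def dsum (X Y : QRep k Q) : QRep k Q where
  M i := X.M i × Y.M i
  f ρ := (X.f ρ).prodMap (Y.f ρ)

/-- The zero representation. -/
def zero (k : Type) [Field k] (Q : FinQuiver) : QRep k Q where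
  M _ := PUnit
  f _ := 0

/-- The direct sum of a list of representations. -/
def dsumList (l : List (QRep k Q)) : QRep k Q := l.foldr dsum (zero k Q)

/-- A representation is zero if all its vector spaces are zero. -/
def IsZero (X : QRep k Q) : Prop := ∀ i, ∀ x : X.M i, x = 0

/-- An indecomposable representation. -/
def Indec (X : QRep k Q) : Prop :=
  ¬ X.IsZero ∧ ∀ Y Z : QRep k Q, X.Iso (Y.dsum Z) → Y.IsZero ∨ Z.IsZero

/-- `X` is isomorphic to a direct sum of exactly `m` indecomposable representations. -/
def HasIndecSummands (X : QRep k Q) (m : ℕ) : Prop :=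
  ∃ l : List (QRep k Q), l.length = m ∧ (∀ Y ∈ l, Y.Indec) ∧ X.Iso (dsumList l)

/-- The dimension vector of a representation. -/
def dim (X : QRep k Q) : Q.V → ℤ := fun i => (Module.finrank k (X.M i) : ℤ)

/-- The twist `^aX` of a representation by a quiver automorphism. -/
def twist (σ : QuiverAut Q) (X : QRep k Q) : QRep k Q where
  M i := X.M (σ.vmap.symm i)
  f ρ := by
    have h1 : Q.s ρ = σ.vmap (Q.s (σ.amap.symm ρ)) := by
      have h := σ.hs (σ.amap.symm ρ); simpa using h
    have h2 : Q.t ρ = σ.vmap (Q.t (σ.amap.symm ρ)) := by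
      have h := σ.ht (σ.amap.symm ρ); simpa using h
    have hs : σ.vmap.symm (Q.s ρ) = Q.s (σ.amap.symm ρ) := by rw [h1]; simp
    have ht : σ.vmap.symm (Q.t ρ) = Q.t (σ.amap.symm ρ) := by rw [h2]; simp
    show X.M (σ.vmap.symm (Q.s ρ)) →ₗ[k] X.M (σ.vmap.symm (Q.t ρ))
    rw [hs, ht]
    exact X.f (σ.amap.symm ρ)

/-- An isomorphically invariant representation: `^aX ≅ X`. -/
def IsII (σ : QuiverAut Q) (X : QRep k Q) : Prop := (X.twist σ).Iso X

/-- An isomorphically invariant indecomposable (ii-indecomposable): an ii-representation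
which is not isomorphic to the direct sum of two non-zero ii-representations. -/
def IsIIIndec (σ : QuiverAut Q) (X : QRep k Q) : Prop :=
  X.IsII σ ∧ ¬ X.IsZero ∧
    ∀ Y Z : QRep k Q, Y.IsII σ → Z.IsII σ → X.Iso (Y.dsum Z) → Y.IsZero ∨ Z.IsZero

end QRep

section AuxProof

variable {Q : FinQuiver} (σ : QuiverAut Q)

/-- A function invariant under one step of `vmap` is constant on orbits. -/
lemma aux_const_on_orbit {β : Type*} (g : Q.V → β) (hg : ∀ i, g (σ.vmap i) = g i)
    {i j : Q.V} (h : σ.SameOrbit i j) : g i = g j := by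
  obtain ⟨n, rfl⟩ := h
  have hg' : ∀ i, g (σ.vmap.symm i) = g i := by
    intro i
    conv_rhs => rw [← σ.vmap.apply_symm_apply i, hg]
  suffices H : ∀ (m : ℤ) (i : Q.V), g (((σ.vmap : Equiv.Perm Q.V) ^ m) i) = g i by
    exact (H n i).symm
  intro m
  induction m using Int.induction_on with
  | zero => intro i; simp
  | succ n ih =>
      intro i
      have h2 : ((σ.vmap : Equiv.Perm Q.V) ^ ((n : ℤ) + 1)) i
          = ((σ.vmap : Equiv.Perm Q.V) ^ (n : ℤ)) (σ.vmap i) := by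
        rw [zpow_add_one, Equiv.Perm.mul_apply]
      rw [h2, ih, hg]
  | pred n ih =>
      intro i
      have h2 : ((σ.vmap : Equiv.Perm Q.V) ^ (-(n : ℤ) - 1)) i
          = ((σ.vmap : Equiv.Perm Q.V) ^ (-(n : ℤ))) (σ.vmap.symm i) := by
        rw [zpow_sub_one, Equiv.Perm.mul_apply]; rfl
      rw [h2, ih, hg']

lemma aux_orbOf_eq_iff {i j : Q.V} : σ.orbOf i = σ.orbOf j ↔ σ.SameOrbit i j :=
  ⟨fun h => Quotient.exact h, fun h => Quotient.sound h⟩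

lemma aux_orbOf_out (oi : σ.Orb) : σ.orbOf oi.out = oi := Quotient.out_eq oi

lemma aux_orbOf_vmap (i : Q.V) : σ.orbOf (σ.vmap i) = σ.orbOf i :=
  (aux_orbOf_eq_iff σ).2 ⟨-1, by simp⟩

lemma aux_fixed_const {α : Q.V → ℤ} (hα : σ.IsFixed α) {i j : Q.V}
    (h : σ.SameOrbit i j) : α i = α j :=
  aux_const_on_orbit σ α hα h

lemma aux_fmap_apply {α : Q.V → ℤ} (hα : σ.IsFixed α) (i : Q.V) :
    σ.fmap α (σ.orbOf i) = α i :=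
  aux_fixed_const σ hα ((aux_orbOf_eq_iff σ).1 (aux_orbOf_out σ (σ.orbOf i)))

lemma aux_eQ_zero (hadm : σ.Admissible) {i j : Q.V} (h : σ.SameOrbit i j) :
    Q.eQ i j = 0 := by
  rw [FinQuiver.eQ, Finset.card_eq_zero, Finset.filter_eq_empty_iff]
  rintro ρ - (⟨hs, ht⟩ | ⟨hs, ht⟩)
  · exact hadm ρ (hs ▸ ht ▸ h)
  · exact hadm ρ (hs ▸ ht ▸ (σ.sameOrbit_equivalence.symm h))

lemma aux_AQ_same (hadm : σ.Admissible) {i j : Q.V} (h : σ.SameOrbit i j) :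
    Q.AQ i j = if i = j then 2 else 0 := by
  by_cases hij : i = j
  · simp [FinQuiver.AQ, hij]
  · simp [FinQuiver.AQ, hij, aux_eQ_zero σ hadm h]

lemma aux_formQ_eVec (α : Q.V → ℤ) (i : Q.V) :
    Q.formQ α (eVec i) = ∑ u, Q.AQ u i * α u := by
  unfold FinQuiver.formQ eVec
  refine Finset.sum_congr rfl fun u _ => ?_
  simp [mul_ite, Finset.sum_ite_eq', mul_comm]

lemma aux_eQ_vmap (i j : Q.V) : Q.eQ (σ.vmap i) (σ.vmap j) = Q.eQ i j := by
  unfold FinQuiver.eQ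
  refine (Finset.card_equiv σ.amap fun ρ => ?_).symm
  simp only [Finset.mem_filter, Finset.mem_univ, true_and, σ.hs, σ.ht,
    Equiv.apply_eq_iff_eq]

lemma aux_AQ_vmap (i j : Q.V) : Q.AQ (σ.vmap i) (σ.vmap j) = Q.AQ i j := by
  unfold FinQuiver.AQ
  rw [aux_eQ_vmap σ, Equiv.apply_eq_iff_eq]

lemma aux_formQ_eVec_vmap {α : Q.V → ℤ} (hα : σ.IsFixed α) (j : Q.V) :
    Q.formQ α (eVec (σ.vmap j)) = Q.formQ α (eVec j) := by
  rw [aux_formQ_eVec, aux_formQ_eVec]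
  refine (Fintype.sum_equiv σ.vmap _ _ fun u => ?_).symm
  rw [aux_AQ_vmap σ, hα]

lemma aux_formQ_eVec_const {α : Q.V → ℤ} (hα : σ.IsFixed α) {i j : Q.V}
    (h : σ.SameOrbit i j) : Q.formQ α (eVec i) = Q.formQ α (eVec j) :=
  aux_const_on_orbit σ (fun u => Q.formQ α (eVec u)) (aux_formQ_eVec_vmap σ hα) h

/-- The fiber of an orbit. -/
def aux_fiber (oi : σ.Orb) : Finset Q.V := Finset.univ.filter fun i => σ.orbOf i = oi

lemma aux_mem_fiber {i : Q.V} {oi : σ.Orb} :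
    i ∈ aux_fiber σ oi ↔ σ.orbOf i = oi := by simp [aux_fiber]

lemma aux_d_eq (oi : σ.Orb) : σ.d oi = (aux_fiber σ oi).card := rfl

/-- Double-indicator sums over two finsets. -/
lemma aux_indic {γ : Type*} [DecidableEq γ] (u v : γ) (F G : Finset γ) :
    ∑ i ∈ F, ∑ j ∈ G, (if u = i ∧ v = j then (1 : ℤ) else 0)
      = (if u ∈ F then (1 : ℤ) else 0) * (if v ∈ G then (1 : ℤ) else 0) := by
  have h : ∀ i j : γ, (if u = i ∧ v = j then (1 : ℤ) else 0)
      = (if u = i then (1 : ℤ) else 0) * (if v = j then (1 : ℤ) else 0) := by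
    intro i j; by_cases h1 : u = i <;> by_cases h2 : v = j <;> simp [h1, h2]
  simp only [h]
  rw [← Finset.sum_mul_sum, Finset.sum_ite_eq F u (fun _ => (1 : ℤ)),
    Finset.sum_ite_eq G v (fun _ => (1 : ℤ))]

lemma aux_sum_eQ {oi oj : σ.Orb} (hne : oi ≠ oj) :
    ∑ i ∈ aux_fiber σ oi, ∑ j ∈ aux_fiber σ oj, (Q.eQ i j : ℤ) = (σ.e oi oj : ℤ) := by
  have key : ∑ i ∈ aux_fiber σ oi, ∑ j ∈ aux_fiber σ oj, (Q.eQ i j : ℤ)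
      = ∑ ρ : Q.A, ∑ i ∈ aux_fiber σ oi, ∑ j ∈ aux_fiber σ oj,
          (if (Q.s ρ = i ∧ Q.t ρ = j) ∨ (Q.s ρ = j ∧ Q.t ρ = i) then (1 : ℤ) else 0) := by
    have e1 : ∑ i ∈ aux_fiber σ oi, ∑ j ∈ aux_fiber σ oj, (Q.eQ i j : ℤ)
        = ∑ i ∈ aux_fiber σ oi, ∑ j ∈ aux_fiber σ oj, ∑ ρ : Q.A,
          (if (Q.s ρ = i ∧ Q.t ρ = j) ∨ (Q.s ρ = j ∧ Q.t ρ = i) then (1 : ℤ) else 0) := by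
      refine Finset.sum_congr rfl fun i _ => Finset.sum_congr rfl fun j _ => ?_
      rw [FinQuiver.eQ, Finset.card_filter]
      push_cast
      rfl
    have e2 : ∑ i ∈ aux_fiber σ oi, ∑ j ∈ aux_fiber σ oj, ∑ ρ : Q.A,
          (if (Q.s ρ = i ∧ Q.t ρ = j) ∨ (Q.s ρ = j ∧ Q.t ρ = i) then (1 : ℤ) else 0)
        = ∑ i ∈ aux_fiber σ oi, ∑ ρ : Q.A, ∑ j ∈ aux_fiber σ oj,
          (if (Q.s ρ = i ∧ Q.t ρ = j) ∨ (Q.s ρ = j ∧ Q.t ρ = i) then (1 : ℤ) else 0) :=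
      Finset.sum_congr rfl fun i _ => Finset.sum_comm
    rw [e1, e2, Finset.sum_comm]
  have hρ : ∀ ρ : Q.A, ∑ i ∈ aux_fiber σ oi, ∑ j ∈ aux_fiber σ oj,
      (if (Q.s ρ = i ∧ Q.t ρ = j) ∨ (Q.s ρ = j ∧ Q.t ρ = i) then (1 : ℤ) else 0)
      = if (σ.orbOf (Q.s ρ) = oi ∧ σ.orbOf (Q.t ρ) = oj) ∨
          (σ.orbOf (Q.s ρ) = oj ∧ σ.orbOf (Q.t ρ) = oi) then (1 : ℤ) else 0 := by
    intro ρ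
    have split : ∀ i j : Q.V,
        (if (Q.s ρ = i ∧ Q.t ρ = j) ∨ (Q.s ρ = j ∧ Q.t ρ = i) then (1 : ℤ) else 0)
        = (if Q.s ρ = i ∧ Q.t ρ = j then (1 : ℤ) else 0)
          + (if Q.s ρ = j ∧ Q.t ρ = i then (1 : ℤ) else 0) := by
      intro i j
      by_cases h1 : Q.s ρ = i ∧ Q.t ρ = j
      · have h2 : ¬ (Q.s ρ = j ∧ Q.t ρ = i) := by
          rintro ⟨hs2, ht2⟩
          exact Q.no_loop ρ (h1.1.trans ht2.symm)
        rw [if_pos (Or.inl h1), if_pos h1, if_neg h2]; norm_num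
      · by_cases h2 : Q.s ρ = j ∧ Q.t ρ = i
        · rw [if_pos (Or.inr h2), if_neg h1, if_pos h2]; norm_num
        · rw [if_neg (by tauto), if_neg h1, if_neg h2]; norm_num
    have swap2 : ∑ i ∈ aux_fiber σ oi, ∑ j ∈ aux_fiber σ oj,
        (if Q.s ρ = j ∧ Q.t ρ = i then (1 : ℤ) else 0)
        = ∑ j ∈ aux_fiber σ oj, ∑ i ∈ aux_fiber σ oi,
        (if Q.s ρ = j ∧ Q.t ρ = i then (1 : ℤ) else 0) := Finset.sum_comm
    simp only [split, Finset.sum_add_distrib, swap2, aux_indic, aux_mem_fiber]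
    have hne' : oj ≠ oi := Ne.symm hne
    by_cases hA : σ.orbOf (Q.s ρ) = oi
    · have hC : ¬ σ.orbOf (Q.s ρ) = oj := fun h => hne (hA.symm.trans h)
      by_cases hB : σ.orbOf (Q.t ρ) = oj <;> simp [hA, hB, hC, hne, hne']
    · by_cases hC : σ.orbOf (Q.s ρ) = oj
      · by_cases hD : σ.orbOf (Q.t ρ) = oi <;> simp [hA, hC, hD, hne, hne']
      · simp [hA, hC]
  rw [key, Finset.sum_congr rfl fun ρ _ => hρ ρ]
  rw [QuiverAut.e, Finset.card_filter]
  push_cast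
  rfl

lemma aux_sum_AQ (hadm : σ.Admissible) (oi oj : σ.Orb) :
    ∑ i ∈ aux_fiber σ oi, ∑ j ∈ aux_fiber σ oj, Q.AQ i j = σ.B oi oj := by
  by_cases h : oi = oj
  · subst h
    rw [show σ.B oi oi = 2 * (σ.d oi : ℤ) from by simp [QuiverAut.B]]
    have hin : ∀ i ∈ aux_fiber σ oi, ∑ j ∈ aux_fiber σ oi, Q.AQ i j = 2 := by
      intro i hi
      have : ∀ j ∈ aux_fiber σ oi, Q.AQ i j = if i = j then 2 else 0 := by
        intro j hj
        exact aux_AQ_same σ hadm ((aux_orbOf_eq_iff σ).1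
          (((aux_mem_fiber σ).1 hi).trans ((aux_mem_fiber σ).1 hj).symm))
      rw [Finset.sum_congr rfl this, Finset.sum_ite_eq (aux_fiber σ oi) i fun _ => (2 : ℤ),
        if_pos hi]
    rw [Finset.sum_congr rfl hin, Finset.sum_const, aux_d_eq, nsmul_eq_mul, mul_comm]
  · rw [show σ.B oi oj = -(σ.e oi oj : ℤ) from by simp [QuiverAut.B, h],
      ← aux_sum_eQ σ h, ← Finset.sum_neg_distrib]
    refine Finset.sum_congr rfl fun i hi => ?_
    rw [← Finset.sum_neg_distrib]
    refine Finset.sum_congr rfl fun j hj => ?_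
    have hij : i ≠ j := by
      intro hij
      exact h ((((aux_mem_fiber σ).1 hi).symm.trans (hij ▸ (aux_mem_fiber σ).1 hj)))
    simp [FinQuiver.AQ, hij]

lemma aux_part1 (hadm : σ.Admissible) (α β : Q.V → ℤ) (hα : σ.IsFixed α)
    (hβ : σ.IsFixed β) : Q.formQ α β = σ.formG (σ.fmap α) (σ.fmap β) := by
  have fib : ∀ g : Q.V → ℤ, ∑ i, g i = ∑ oi, ∑ i ∈ aux_fiber σ oi, g i := by
    intro g
    exact (Finset.sum_fiberwise Finset.univ σ.orbOf g).symm
  rw [FinQuiver.formQ, QuiverAut.formG, fib]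
  refine Finset.sum_congr rfl fun oi _ => ?_
  rw [Finset.sum_congr rfl fun i _ => fib fun j => Q.AQ i j * α i * β j,
    Finset.sum_comm]
  refine Finset.sum_congr rfl fun oj _ => ?_
  have : ∀ i ∈ aux_fiber σ oi, ∀ j ∈ aux_fiber σ oj,
      Q.AQ i j * α i * β j = Q.AQ i j * σ.fmap α oi * σ.fmap β oj := by
    intro i hi j hj
    rw [← (aux_mem_fiber σ).1 hi, ← (aux_mem_fiber σ).1 hj,
      aux_fmap_apply σ hα, aux_fmap_apply σ hβ]
  rw [Finset.sum_congr rfl fun i hi =>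
    Finset.sum_congr rfl fun j hj => this i hi j hj]
  simp only [← Finset.sum_mul]
  rw [aux_sum_AQ σ hadm]

lemma aux_formG_eVec (hadm : σ.Admissible) {α : Q.V → ℤ} (hα : σ.IsFixed α)
    (oi : σ.Orb) :
    σ.formG (σ.fmap α) (eVec oi) = (σ.d oi : ℤ) * Q.formQ α (eVec oi.out) := by
  set χ : Q.V → ℤ := fun i => if σ.orbOf i = oi then 1 else 0 with hχdef
  have hχfix : σ.IsFixed χ := by
    intro i; simp only [hχdef, aux_orbOf_vmap]
  have hfχ : σ.fmap χ = eVec oi := by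
    funext oj
    simp only [QuiverAut.fmap, hχdef, eVec, aux_orbOf_out]
  have h1 : Q.formQ α χ = σ.formG (σ.fmap α) (eVec oi) := by
    rw [aux_part1 σ hadm α χ hα hχfix, hfχ]
  rw [← h1]
  have h2 : Q.formQ α χ = ∑ j ∈ aux_fiber σ oi, Q.formQ α (eVec j) := by
    rw [FinQuiver.formQ, Finset.sum_comm]
    have : ∀ j : Q.V, ∑ i, Q.AQ i j * α i * χ j
        = if σ.orbOf j = oi then ∑ i, Q.AQ i j * α i else 0 := by
      intro j
      by_cases hj : σ.orbOf j = oi <;> simp [hχdef, hj]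
    rw [Finset.sum_congr rfl fun j _ => this j, ← Finset.sum_filter]
    refine Finset.sum_congr rfl fun j _ => (aux_formQ_eVec α j).symm
  have h3 : ∀ j ∈ aux_fiber σ oi, Q.formQ α (eVec j) = Q.formQ α (eVec oi.out) := by
    intro j hj
    exact aux_formQ_eVec_const σ hα ((aux_orbOf_eq_iff σ).1
      (((aux_mem_fiber σ).1 hj).trans (aux_orbOf_out σ oi).symm))
  rw [h2, Finset.sum_congr rfl h3, Finset.sum_const, ← aux_d_eq, nsmul_eq_mul]

lemma aux_foldr (hadm : σ.Admissible) (oi : σ.Orb) (α : Q.V → ℤ) :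
    ∀ l : List Q.V, l.Nodup → (∀ i ∈ l, σ.orbOf i = oi) →
      l.foldr Q.reflQ α = fun j => α j - (if j ∈ l then Q.formQ α (eVec j) else 0) := by
  intro l
  induction l with
  | nil => intro _ _; simp
  | cons i l ih =>
      intro hnd horb
      have hil : i ∉ l := (List.nodup_cons.1 hnd).1
      have ihl := ih (List.nodup_cons.1 hnd).2 (fun u hu => horb u (List.mem_cons_of_mem i hu))
      rw [List.foldr_cons, ihl]
      have hform : Q.formQ (fun j => α j - (if j ∈ l then Q.formQ α (eVec j) else 0))
          (eVec i) = Q.formQ α (eVec i) := by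
        rw [aux_formQ_eVec, aux_formQ_eVec]
        refine Finset.sum_congr rfl fun u _ => ?_
        by_cases hu : u ∈ l
        · have hui : u ≠ i := fun h => hil (h ▸ hu)
          have : Q.AQ u i = 0 := by
            rw [aux_AQ_same σ hadm ((aux_orbOf_eq_iff σ).1
              ((horb u (List.mem_cons_of_mem i hu)).trans (horb i List.mem_cons_self).symm)),
              if_neg hui]
          simp [this]
        · simp [hu]
      funext j
      rw [FinQuiver.reflQ]
      simp only [hform]
      by_cases hj : j = i
      · subst hj
        simp [eVec, hil, List.mem_cons]
      · simp [eVec, hj, List.mem_cons]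

end AuxProof


/-- For all `α, β ∈ (ℤ𝓘)^⟨a⟩`: (1) `(α,β)_Q = (f(α),f(β))_Γ`;
(2) setting `s_𝐢 := ∏_{i ∈ 𝐢} r_i ∈ W(Q)` (here realised by folding the reflections `r_i`
over any enumeration of the orbit `𝐢`, which is well defined since these reflections
pairwise commute by admissibility), one has `f(s_𝐢(α)) = r_𝐢(f(α))` in `ℤ𝐈`. -/
theorem statement_2 (Q : FinQuiver) (σ : QuiverAut Q) (hadm : σ.Admissible) :
    (∀ α β : Q.V → ℤ, σ.IsFixed α → σ.IsFixed β →
      Q.formQ α β = σ.formG (σ.fmap α) (σ.fmap β)) ∧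
    (∀ (oi : σ.Orb) (l : List Q.V), l.Nodup → (∀ i, i ∈ l ↔ σ.orbOf i = oi) →
      ∀ α : Q.V → ℤ, σ.IsFixed α →
        σ.fmap (l.foldr Q.reflQ α) = σ.reflG oi (σ.fmap α)) := by
  constructor
  · exact fun α β hα hβ => aux_part1 σ hadm α β hα hβ
  · intro oi l hnd hl α hα
    rw [aux_foldr σ hadm oi α l hnd (fun i hi => (hl i).1 hi)]
    funext oj
    have hd0 : (σ.d oi : ℤ) ≠ 0 := by
      exact_mod_cast (σ.d_pos oi).ne'
    have hdiv : σ.formG (σ.fmap α) (eVec oi) / (σ.d oi : ℤ)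
        = Q.formQ α (eVec oi.out) := by
      rw [aux_formG_eVec σ hadm hα oi, Int.mul_ediv_cancel_left _ hd0]
    rw [QuiverAut.reflG, hdiv]
    show α oj.out - (if oj.out ∈ l then Q.formQ α (eVec oj.out) else 0)
        = σ.fmap α oj - Q.formQ α (eVec oi.out) * eVec oi oj
    by_cases h : oj = oi
    · subst h
      have hmem : oj.out ∈ l := (hl oj.out).2 (aux_orbOf_out σ oj)
      simp only [hmem, if_true, eVec, if_pos rfl, mul_one]
      rfl
    · have hmem : oj.out ∉ l := fun hm =>
        h ((aux_orbOf_out σ oj).symm.trans ((hl oj.out).1 hm))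
      simp only [hmem, if_false, eVec, h, if_neg h, mul_zero]
      rfl
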